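/- There is no independent set I of vertices in a forest D (with 0/1-labelled vertices and edges) such that I contains all vertices labelled 0 and every edge labelled 0 has exactly one endpoint in I, if and only if D contains a path e₀, e₁, …, e_k of odd length k such that e₀ and e_k are labelled 0 and every edge {e_{i−1}, e_i} with even i is labelled 0. -/

import Mathlib

namespace Stmt19

variable {V : Type*}

def AltW (G : SimpleGraph V) (le : Sym2 V → Bool) (f : ℕ → V) (m : ℕ) : Prop :=
  (∀ i < m, G.Adj (f i) (f (i + 1))) ∧
  (∀ i, 0 < i → i ≤ m → Even i → le s(f (i - 1), f i) = false)

def BadW (G : SimpleGraph V) (lv : V → Bool) (le : Sym2 V → Bool) : Prop :=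
  ∃ k f, Odd k ∧ AltW G le f k ∧ lv (f 0) = false ∧ lv (f k) = false

def Fset (G : SimpleGraph V) (lv : V → Bool) (le : Sym2 V → Bool) : Set V :=
  {v | ∃ m f, Even m ∧ AltW G le f m ∧ lv (f 0) = false ∧ f m = v}

def mkWalk (G : SimpleGraph V) (f : ℕ → V) :
    ∀ n, (∀ i < n, G.Adj (f i) (f (i + 1))) → G.Walk (f 0) (f n)
  | 0, _ => SimpleGraph.Walk.nil
  | n + 1, h =>
      (mkWalk G f n fun i hi => h i (Nat.lt_succ_of_lt hi)).concat (h n n.lt_succ_self)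

lemma mkWalk_support (G : SimpleGraph V) (f : ℕ → V) :
    ∀ n h, (mkWalk G f n h).support = (List.range (n + 1)).map f := by
  intro n
  induction n with
  | zero => intro h; simp [mkWalk, List.range_succ]
  | succ n ih =>
      intro h
      rw [mkWalk, SimpleGraph.Walk.support_concat, ih, List.range_succ (n := n + 1)]
      simp

lemma mkWalk_length (G : SimpleGraph V) (f : ℕ → V) :
    ∀ n h, (mkWalk G f n h).length = n := by
  intro n
  induction n with
  | zero => intro h; simp [mkWalk]
  | succ n ih => intro h; rw [mkWalk, SimpleGraph.Walk.length_concat, ih]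

lemma forest_inj {G : SimpleGraph V} (hG : G.IsAcyclic) (f : ℕ → V) (m : ℕ)
    (hadj : ∀ i < m, G.Adj (f i) (f (i + 1)))
    (hnb : ∀ i, i + 2 ≤ m → f (i + 2) ≠ f i) :
    ∀ a ≤ m, ∀ b ≤ m, f a = f b → a = b := by
  by_contra hcon
  push_neg at hcon
  -- there is some positive gap d with a + d ≤ m, f (a+d) = f a
  have hex : ∃ d, 0 < d ∧ ∃ a, a + d ≤ m ∧ f (a + d) = f a := by
    obtain ⟨a, ha, b, hb, hfab, hne⟩ := hcon
    rcases Nat.lt_or_ge a b with h | h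
    · exact ⟨b - a, by omega, a, by omega, by rw [show a + (b - a) = b by omega]; exact hfab.symm⟩
    · have : b < a := by omega
      exact ⟨a - b, by omega, b, by omega, by rw [show b + (a - b) = a by omega]; exact hfab⟩
  classical
  obtain ⟨d, hds, hmin⟩ : ∃ d, (0 < d ∧ ∃ a, a + d ≤ m ∧ f (a + d) = f a) ∧
      ∀ d' < d, ¬(0 < d' ∧ ∃ a, a + d' ≤ m ∧ f (a + d') = f a) :=
    ⟨Nat.find hex, Nat.find_spec hex, fun d' h => Nat.find_min hex h⟩
  obtain ⟨hd0, a, hdm, hfd⟩ := hds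
  have hinj : ∀ c1 c2, a ≤ c1 → c1 ≤ c2 → c2 ≤ a + d - 1 → f c1 = f c2 → c1 = c2 := by
    intro c1 c2 h1 h2 h3 hf
    by_contra hne
    have hlt : c1 < c2 := by omega
    exact hmin (c2 - c1) (by omega) ⟨by omega, c1, by omega,
      by rw [show c1 + (c2 - c1) = c2 by omega]; exact hf.symm⟩
  rcases Nat.lt_or_ge d 3 with hd3 | hd3
  · interval_cases d
    · exact (hadj a (by omega)).ne hfd.symm
    · exact hnb a (by omega) hfd
  · -- two distinct paths from f a to f (a + 1)
    have hadj1 : G.Adj (f a) (f (a + 1)) := hadj a (by omega)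
    set g : ℕ → V := fun i => f (a + d - i) with hg
    have hgadj : ∀ i < d - 1, G.Adj (g i) (g (i + 1)) := by
      intro i hi
      have h1 : G.Adj (f (a + d - i - 1)) (f (a + d - i - 1 + 1)) := hadj _ (by omega)
      have h2 : f (a + d - i - 1 + 1) = g i := congrArg f (by omega)
      have h3 : f (a + d - i - 1) = g (i + 1) := congrArg f (by omega)
      rw [h2, h3] at h1
      exact h1.symm
    have hu : g 0 = f a := by simpa [hg] using hfd
    have hv : g (d - 1) = f (a + 1) := congrArg f (by omega)
    have hnodup : (mkWalk G g (d - 1) hgadj).support.Nodup := by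
      rw [mkWalk_support]
      refine List.Nodup.map_on ?_ List.nodup_range
      intro i hi j hj hgij
      simp only [List.mem_range] at hi hj
      have gi : ∀ t, g t = f (a + d - t) := fun t => rfl
      rw [gi, gi] at hgij
      by_cases h0i : i = 0 <;> by_cases h0j : j = 0
      · omega
      · subst h0i
        have : f a = f (a + d - j) := by
          rw [← hfd]; simpa using hgij
        have := hinj a (a + d - j) (by omega) (by omega) (by omega) this
        omega
      · subst h0j
        have : f a = f (a + d - i) := by
          rw [← hfd]; simpa using hgij.symm
        have := hinj a (a + d - i) (by omega) (by omega) (by omega) this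
        omega
      · rcases Nat.le_total i j with h | h
        · have := hinj (a + d - j) (a + d - i) (by omega) (by omega) (by omega) hgij.symm
          omega
        · have := hinj (a + d - i) (a + d - j) (by omega) (by omega) (by omega) hgij
          omega
    have heq := SimpleGraph.isAcyclic_iff_path_unique.mp hG (SimpleGraph.Path.singleton hadj1)
      ⟨(mkWalk G g (d - 1) hgadj).copy hu hv,
        by rw [SimpleGraph.Walk.isPath_copy]; exact (SimpleGraph.Walk.isPath_def _).mpr hnodup⟩
    have hlen := congrArg (fun p : G.Path (f a) (f (a + 1)) => p.1.length) heq
    simp only [SimpleGraph.Path.singleton, SimpleGraph.Walk.length_copy,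
      SimpleGraph.Walk.length_cons, SimpleGraph.Walk.length_nil] at hlen
    rw [mkWalk_length] at hlen
    omega


lemma reduce {G : SimpleGraph V} (le : Sym2 V → Bool) :
    ∀ m f, AltW G le f m → ∃ (m' : ℕ) (f' : ℕ → V), m' ≤ m ∧ m' % 2 = m % 2 ∧
      AltW G le f' m' ∧ f' 0 = f 0 ∧ f' m' = f m ∧
      ∀ i, i + 2 ≤ m' → f' (i + 2) ≠ f' i := by
  intro m
  induction m using Nat.strong_induction_on with
  | _ m ih =>
    intro f hf
    by_cases hb : ∃ i, i + 2 ≤ m ∧ f (i + 2) = f i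
    · obtain ⟨i, him, hfi⟩ := hb
      classical
      set g : ℕ → V := fun j => if j ≤ i then f j else f (j + 2) with hgdef
      have gle : ∀ j, j ≤ i → g j = f j := fun j h => if_pos h
      have ggt : ∀ j, i < j → g j = f (j + 2) := fun j h => if_neg (by omega)
      have hg : AltW G le g (m - 2) := by
        constructor
        · intro j hj
          rcases Nat.lt_trichotomy j i with h | h | h
          · rw [gle j (by omega), gle (j + 1) (by omega)]
            exact hf.1 j (by omega)
          · subst h
            rw [gle j le_rfl, ggt (j + 1) (by omega), hfi.symm]
            exact hf.1 (j + 2) (by omega)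
          · rw [ggt j h, ggt (j + 1) (by omega)]
            exact hf.1 (j + 2) (by omega)
        · intro j hj0 hjm hje
          rcases Nat.lt_or_ge j (i + 1) with h | h
          · rw [show g (j - 1) = f (j - 1) from gle _ (by omega), gle j (by omega)]
            exact hf.2 j hj0 (by omega) hje
          · have e1 : g (j - 1) = f (j + 1) := by
              rcases Nat.eq_or_lt_of_le h with h' | h'
              · rw [show j - 1 = i by omega, gle i le_rfl, hfi.symm]
                congr 1
                omega
              · rw [ggt (j - 1) (by omega)]
                congr 1
                omega
            rw [e1, ggt j (by omega)]
            have : Even (j + 2) := by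
              obtain ⟨t, ht⟩ := hje; exact ⟨t + 1, by omega⟩
            have := hf.2 (j + 2) (by omega) (by omega) this
            simpa using this
      obtain ⟨m', f', h1, h2, h3, h4, h5, h6⟩ := ih (m - 2) (by omega) g hg
      refine ⟨m', f', by omega, by omega, h3, ?_, ?_, h6⟩
      · rw [h4, gle 0 (by omega)]
      · rw [h5]
        rcases Nat.lt_or_ge (m - 2) (i + 1) with h | h
        · rw [gle (m - 2) (by omega), show m - 2 = i by omega, hfi.symm]
          congr 1
          omega
        · rw [ggt (m - 2) (by omega)]
          congr 1
          omega
    · push_neg at hb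
      exact ⟨m, f, le_rfl, rfl, hf, rfl, rfl, hb⟩

lemma badw_to_path {G : SimpleGraph V} (hG : G.IsAcyclic) {lv : V → Bool} {le : Sym2 V → Bool}
    (h : BadW G lv le) :
    ∃ (k : ℕ) (f : ℕ → V), Odd k ∧
      (∀ i < k, G.Adj (f i) (f (i + 1))) ∧
      (∀ i ≤ k, ∀ j ≤ k, f i = f j → i = j) ∧
      lv (f 0) = false ∧ lv (f k) = false ∧
      (∀ i, 0 < i → i ≤ k → Even i → le s(f (i - 1), f i) = false) := by
  obtain ⟨k, f, hk, hw, h0, hk0⟩ := h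
  obtain ⟨m', f', h1, h2, h3, h4, h5, h6⟩ := reduce le k f hw
  have hodd : Odd m' := by
    rw [Nat.odd_iff] at hk ⊢
    omega
  exact ⟨m', f', hodd, h3.1, forest_inj hG f' m' h3.1 h6, by rw [h4]; exact h0,
    by rw [h5]; exact hk0, h3.2⟩

lemma altw_rev {G : SimpleGraph V} {le : Sym2 V → Bool} {f : ℕ → V} {k : ℕ}
    (hw : AltW G le f k) (hk : Odd k) : AltW G le (fun i => f (k - i)) k := by
  constructor
  · intro i hi
    have h1 : G.Adj (f (k - i - 1)) (f (k - i - 1 + 1)) := hw.1 _ (by omega)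
    have h2 : f (k - i - 1 + 1) = f (k - i) := congrArg f (by omega)
    have h3 : f (k - i - 1) = f (k - (i + 1)) := congrArg f (by omega)
    rw [h2, h3] at h1
    exact h1.symm
  · intro i hi0 hik hie
    have hje : Even (k - i + 1) := by
      rw [Nat.even_iff] at hie ⊢
      rw [Nat.odd_iff] at hk
      omega
    have := hw.2 (k - i + 1) (by omega) (by omega) hje
    have e1 : f (k - i + 1 - 1) = f (k - i) := congrArg f (by omega)
    have e2 : f (k - i + 1) = f (k - (i - 1)) := congrArg f (by omega)
    rw [e1, e2] at this
    rw [Sym2.eq_swap]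
    exact this

lemma extend_mem {G : SimpleGraph V} {lv : V → Bool} {le : Sym2 V → Bool}
    {f : ℕ → V} {k : ℕ} {v : V}
    (hw : AltW G le f k) (hk : Odd k) (h0 : lv (f 0) = false)
    (huv : G.Adj (f k) v) (hle : le s(f k, v) = false) : v ∈ Fset G lv le := by
  classical
  set h : ℕ → V := fun i => if i ≤ k then f i else v with hh
  have hl : ∀ j, j ≤ k → h j = f j := fun j hj => if_pos hj
  have hgt : ∀ j, k < j → h j = v := fun j hj => if_neg (by omega)
  refine ⟨k + 1, h, hk.add_one, ⟨?_, ?_⟩, ?_, ?_⟩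
  · intro i hi
    rcases Nat.lt_or_ge i k with h' | h'
    · rw [hl i (by omega), hl (i + 1) (by omega)]
      exact hw.1 i h'
    · have hik : i = k := by omega
      subst hik
      rw [hl i le_rfl, hgt (i + 1) (by omega)]
      exact huv
  · intro i hi0 hik hie
    rcases Nat.lt_or_ge i (k + 1) with h' | h'
    · rw [hl (i - 1) (by omega), hl i (by omega)]
      exact hw.2 i hi0 (by omega) hie
    · have hik' : i = k + 1 := by omega
      subst hik'
      rw [hl (k + 1 - 1) (by omega), hgt (k + 1) (by omega)]
      have : f (k + 1 - 1) = f k := congrArg f (by omega)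
      rw [this]
      exact hle
  · rw [hl 0 (by omega)]
    exact h0
  · rw [hgt (k + 1) (by omega)]

lemma concat_bad {G : SimpleGraph V} {lv : V → Bool} {le : Sym2 V → Bool} {u w : V}
    (hu : u ∈ Fset G lv le) (hw : w ∈ Fset G lv le) (hadj : G.Adj u w) :
    BadW G lv le := by
  classical
  obtain ⟨m1, f, he1, hf, hf0, hfu⟩ := hu
  obtain ⟨m2, g, he2, hg, hg0, hgw⟩ := hw
  set h : ℕ → V := fun i => if i ≤ m1 then f i else g (m1 + m2 + 1 - i) with hh
  have hl : ∀ j, j ≤ m1 → h j = f j := fun j hj => if_pos hj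
  have hgt : ∀ j, m1 < j → h j = g (m1 + m2 + 1 - j) := fun j hj => if_neg (by omega)
  refine ⟨m1 + m2 + 1, h,
    ⟨m1 / 2 + m2 / 2, by rw [Nat.even_iff] at he1 he2; omega⟩, ⟨?_, ?_⟩, ?_, ?_⟩
  · intro i hi
    rcases Nat.lt_trichotomy i m1 with h' | h' | h'
    · rw [hl i (by omega), hl (i + 1) (by omega)]
      exact hf.1 i h'
    · subst h'
      rw [hl i le_rfl, hgt (i + 1) (by omega)]
      have : g (i + m2 + 1 - (i + 1)) = g m2 := congrArg g (by omega)
      rw [this, hfu, hgw]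
      exact hadj
    · rw [hgt i h', hgt (i + 1) (by omega)]
      have e1 : g (m1 + m2 + 1 - i) = g ((m1 + m2 - i) + 1) := congrArg g (by omega)
      have e2 : g (m1 + m2 + 1 - (i + 1)) = g (m1 + m2 - i) := congrArg g (by omega)
      rw [e1, e2]
      exact (hg.1 (m1 + m2 - i) (by omega)).symm
  · intro i hi0 him hie
    rcases Nat.lt_or_ge i (m1 + 1) with h' | h'
    · rw [hl (i - 1) (by omega), hl i (by omega)]
      exact hf.2 i hi0 (by omega) hie
    · have hne : i ≠ m1 + 1 := by
        intro hcon
        rw [Nat.even_iff] at hie he1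
        omega
      rw [hgt (i - 1) (by omega), hgt i (by omega)]
      have hje : Even (m1 + m2 + 2 - i) := by
        rw [Nat.even_iff] at hie he1 he2 ⊢
        omega
      have := hg.2 (m1 + m2 + 2 - i) (by omega) (by omega) hje
      have e1 : g (m1 + m2 + 2 - i - 1) = g (m1 + m2 + 1 - i) := congrArg g (by omega)
      have e2 : g (m1 + m2 + 2 - i) = g (m1 + m2 + 1 - (i - 1)) := congrArg g (by omega)
      rw [e1, e2] at this
      rw [Sym2.eq_swap]
      exact this
  · rw [hl 0 (by omega)]
    exact hf0
  · rw [hgt (m1 + m2 + 1) (by omega)]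
    have : g (m1 + m2 + 1 - (m1 + m2 + 1)) = g 0 := congrArg g (by omega)
    rw [this]
    exact hg0

lemma mem_Fset_of_label {G : SimpleGraph V} {lv : V → Bool} {le : Sym2 V → Bool} {a : V}
    (h : lv a = false) : a ∈ Fset G lv le :=
  ⟨0, fun _ => a, Even.zero,
    ⟨fun i hi => absurd hi (by omega), fun i h1 h2 _ => absurd h2 (by omega)⟩, h, rfl⟩

lemma preserve [DecidableEq V] {G : SimpleGraph V} (hG : G.IsAcyclic)
    {lv : V → Bool} {le : Sym2 V → Bool} (hnb : ¬ BadW G lv le)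
    {u v : V} (huv : G.Adj u v) (hle : le s(u, v) = false)
    (hu : u ∉ Fset G lv le) (hv : v ∉ Fset G lv le) :
    ¬ BadW G (Function.update lv u false) le := by
  rintro ⟨k, f, hk, hw, h0, hk0⟩
  have hf0 : f 0 = u ∨ lv (f 0) = false := by
    by_cases h : f 0 = u
    · exact Or.inl h
    · right; rwa [Function.update_of_ne h] at h0
  have hfk : f k = u ∨ lv (f k) = false := by
    by_cases h : f k = u
    · exact Or.inl h
    · right; rwa [Function.update_of_ne h] at hk0
  rcases hf0 with h0u | h0f <;> rcases hfk with hku | hkf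
  · obtain ⟨m', f', h1, h2, h3, h4, h5, h6⟩ := reduce le k f hw
    have hinj := forest_inj hG f' m' h3.1 h6
    have : (0 : ℕ) = m' := hinj 0 (by omega) m' le_rfl (by rw [h4, h5, h0u, hku])
    rw [Nat.odd_iff] at hk
    omega
  · have hrev := altw_rev hw hk
    have e : f (k - k) = u := by
      rw [Nat.sub_self, h0u]
    refine hv (extend_mem hrev hk ?_ ?_ ?_)
    · show lv (f (k - 0)) = false
      simpa using hkf
    · show G.Adj (f (k - k)) v
      rw [e]; exact huv
    · show le s(f (k - k), v) = false
      rw [e]; exact hle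
  · refine hv (extend_mem hw hk h0f ?_ ?_)
    · rw [hku]; exact huv
    · rw [hku]; exact hle
  · exact hnb ⟨k, f, hk, hw, h0f, hkf⟩

lemma terminal {G : SimpleGraph V} {lv : V → Bool} {le : Sym2 V → Bool}
    (hnb : ¬ BadW G lv le)
    (hterm : ∀ a b, G.Adj a b → le s(a, b) = false →
      a ∈ Fset G lv le ∨ b ∈ Fset G lv le) :
    ∃ I : Set V,
      (∀ v : V, lv v = false → v ∈ I) ∧
      (∀ a ∈ I, ∀ b ∈ I, ¬ G.Adj a b) ∧
      (∀ a b : V, G.Adj a b → le s(a, b) = false → (a ∈ I ↔ b ∉ I)) := by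
  refine ⟨Fset G lv le, fun a h => mem_Fset_of_label h,
    fun a ha b hb hadj => hnb (concat_bad ha hb hadj), ?_⟩
  intro a b hadj hle
  constructor
  · intro ha hb
    exact hnb (concat_bad ha hb hadj)
  · intro hb
    rcases hterm a b hadj hle with h | h
    · exact h
    · exact absurd h hb

lemma build [Fintype V] [DecidableEq V] {G : SimpleGraph V} (hG : G.IsAcyclic)
    (le : Sym2 V → Bool) :
    ∀ (n : ℕ) (lv : V → Bool),
      (Finset.univ.filter fun v => lv v = true).card ≤ n → ¬ BadW G lv le →
      ∃ I : Set V,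
        (∀ v : V, lv v = false → v ∈ I) ∧
        (∀ a ∈ I, ∀ b ∈ I, ¬ G.Adj a b) ∧
        (∀ a b : V, G.Adj a b → le s(a, b) = false → (a ∈ I ↔ b ∉ I)) := by
  intro n
  induction n with
  | zero =>
      intro lv hcard hnb
      refine terminal hnb ?_
      intro a b hadj hle
      left
      have hfa : lv a = false := by
        by_contra h
        have h1 : lv a = true := by revert h; cases lv a <;> simp
        have h2 : a ∈ Finset.univ.filter (fun v => lv v = true) := by simp [h1]
        have := Finset.card_pos.mpr ⟨a, h2⟩
        omega
      exact mem_Fset_of_label hfa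
  | succ n ih =>
      intro lv hcard hnb
      by_cases hterm : ∀ a b, G.Adj a b → le s(a, b) = false →
          a ∈ Fset G lv le ∨ b ∈ Fset G lv le
      · exact terminal hnb hterm
      · push_neg at hterm
        obtain ⟨a, b, hadj, hle, haF, hbF⟩ := hterm
        have hla : lv a = true := by
          by_contra h
          have hfa : lv a = false := by revert h; cases lv a <;> simp
          exact haF (mem_Fset_of_label hfa)
        have hcard' : (Finset.univ.filter fun v => Function.update lv a false v = true).card ≤ n := by
          have hsub : (Finset.univ.filter fun v => Function.update lv a false v = true) ⊆
              (Finset.univ.filter fun v => lv v = true).erase a := by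
            intro x hx
            simp only [Finset.mem_filter, Finset.mem_univ, true_and] at hx
            have hxa : x ≠ a := by
              intro hcon
              rw [hcon, Function.update_self] at hx
              exact Bool.false_ne_true hx
            rw [Function.update_of_ne hxa] at hx
            simp [Finset.mem_erase, hxa, hx]
          have hmem : a ∈ Finset.univ.filter (fun v => lv v = true) := by simp [hla]
          have := Finset.card_le_card hsub
          rw [Finset.card_erase_of_mem hmem] at this
          omega
        obtain ⟨I, h1, h2, h3⟩ := ih (Function.update lv a false) hcard'
          (preserve hG hnb hadj hle haF hbF)
        refine ⟨I, ?_, h2, h3⟩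
        intro x hx
        apply h1
        by_cases hxa : x = a
        · subst hxa
          simp [Function.update_self]
        · rwa [Function.update_of_ne hxa]

end Stmt19

/-- There is no independent set `I` of vertices in a forest `D` (with
0/1-labelled vertices and edges) such that `I` contains all vertices labelled 0 and every
edge labelled 0 has exactly one endpoint in `I`, if and only if `D` contains a (simple)
path `e₀, e₁, …, e_k` of odd length `k` such that `e₀` and `e_k` are labelled 0 and every
edge `{e_{i−1}, e_i}` with even `i` is labelled 0. -/
theorem stmt_19 {V : Type*} [Fintype V] (G : SimpleGraph V) (hG : G.IsAcyclic)
    (lv : V → Bool) (le : Sym2 V → Bool) :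
    (¬ ∃ I : Set V,
        (∀ v : V, lv v = false → v ∈ I) ∧
        (∀ u ∈ I, ∀ w ∈ I, ¬ G.Adj u w) ∧
        (∀ u w : V, G.Adj u w → le s(u, w) = false → (u ∈ I ↔ w ∉ I))) ↔
    (∃ (k : ℕ) (f : ℕ → V), Odd k ∧
        (∀ i < k, G.Adj (f i) (f (i + 1))) ∧
        (∀ i ≤ k, ∀ j ≤ k, f i = f j → i = j) ∧
        lv (f 0) = false ∧ lv (f k) = false ∧
        (∀ i, 0 < i → i ≤ k → Even i → le s(f (i - 1), f i) = false)) := by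
  classical
  constructor
  · intro hno
    by_contra hR
    apply hno
    refine Stmt19.build hG le (Finset.univ.filter fun v => lv v = true).card lv le_rfl ?_
    intro hbw
    exact hR (Stmt19.badw_to_path hG hbw)
  · rintro ⟨k, f, hk, hadj, hinj, h0, hk0, hev⟩ ⟨I, hIa, hIb, hIc⟩
    have key : ∀ j, 2 * j ≤ k → f (2 * j) ∈ I := by
      intro j
      induction j with
      | zero =>
          intro _
          exact hIa _ h0
      | succ j ihj =>
          intro hj
          have h2j : f (2 * j) ∈ I := ihj (by omega)
          have hnot : f (2 * j + 1) ∉ I := fun h =>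
            hIb _ h2j _ h (hadj (2 * j) (by omega))
          have hlab : le s(f (2 * j + 1), f (2 * j + 2)) = false := by
            have := hev (2 * j + 2) (by omega) (by omega) ⟨j + 1, by ring⟩
            have e : f (2 * j + 2 - 1) = f (2 * j + 1) := congrArg f (by omega)
            rwa [e] at this
          have hedge := hIc (f (2 * j + 1)) (f (2 * j + 2))
            (hadj (2 * j + 1) (by omega)) hlab
          have : f (2 * j + 2) ∈ I := by
            by_contra hnw
            exact hnot (hedge.mpr hnw)
          have e : f (2 * (j + 1)) = f (2 * j + 2) := congrArg f (by ring)
          rwa [e]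
    obtain ⟨j, hjk⟩ := hk
    have h1 : f (2 * j) ∈ I := key j (by omega)
    have h2 : f k ∈ I := hIa _ hk0
    have hadj' : G.Adj (f (2 * j)) (f k) := by
      have := hadj (2 * j) (by omega)
      rwa [show 2 * j + 1 = k by omega] at this
    exact hIb _ h1 _ h2 hadj'
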